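/- arXiv:1203.5546 — 2 statements merged into one kernel-verified Lean document; each statement's English description precedes it below -/
import Mathlib

section
/- Let c_i := σ_i − ∫_ℝ δ(y') p_i(y') ν(dy') where δ(y') = Σ_j σ_j p_j(y') as above. Then c_i = a² q_{i-1}(0) Σ_{j=1}^∞ σ_j q_{j-1}(0), and consequently {c_i}_{i=1}^∞ ∈ ℓ²(ℕ, ℝ^P) with ℓ²-norm a² |Σ_j σ_j q_{j-1}(0)| · (Σ_i q_{i-1}(0)²)^{1/2}. -/
open MeasureTheory

/-- With `c_i = σ_i - ∫ δ(y') p_i(y') ν(dy')` and `δ = Σ_j σ_j p_j` (L²(ν)-sum),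
one has `c_i = a² q_i(0) Σ_j σ_j q_j(0)` (0-based indexing), so
`{c_i} ∈ ℓ²(ℕ, ℝ^P)` with ℓ²-norm `a² |Σ_j σ_j q_j(0)| (Σ_i q_i(0)²)^{1/2}`. -/
theorem stmt3 (P : ℕ) (ν : Measure ℝ) (a : ℝ)
    (q : ℕ → ℝ → ℝ) (p : ℕ → ℝ → ℝ)
    (hp : ∀ i x, p i x = x * q i x)
    (hpL2 : ∀ i, MemLp (p i) 2 ν)
    (horth : ∀ i j, ∫ x, p i x * p j x ∂ν
      = (if i = j then 1 else 0) - a ^ 2 * q i 0 * q j 0)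
    (σ : ℕ → EuclideanSpace ℝ (Fin P))
    (hσ : Summable (fun i => ‖σ i‖ ^ 2))
    (hq0 : Summable (fun i => (q i 0) ^ 2))
    (δ : ℝ → EuclideanSpace ℝ (Fin P))
    (hδL2 : MemLp δ 2 ν)
    (hδ : Filter.Tendsto
      (fun N => ∫ y, ‖(∑ j ∈ Finset.range N, p j y • σ j) - δ y‖ ^ 2 ∂ν)
      Filter.atTop (nhds 0))
    (c : ℕ → EuclideanSpace ℝ (Fin P))
    (hc : ∀ i, c i = σ i - ∫ y, p i y • δ y ∂ν) :
    (∀ i, c i = (a ^ 2 * q i 0) • ∑' j, q j 0 • σ j) ∧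
    Memℓp c 2 ∧
    Real.sqrt (∑' i, ‖c i‖ ^ 2)
      = a ^ 2 * ‖∑' j, q j 0 • σ j‖ * Real.sqrt (∑' i, (q i 0) ^ 2) := by
  classical
  set S : EuclideanSpace ℝ (Fin P) := ∑' j, q j 0 • σ j with hSdef
  have hsum : Summable (fun j => q j 0 • σ j) := by
    refine Summable.of_norm ?_
    refine Summable.of_nonneg_of_le (fun j => norm_nonneg _) (fun j => ?_)
      ((hq0.add hσ).div_const 2)
    rw [norm_smul, Real.norm_eq_abs]
    nlinarith [sq_nonneg (|q j 0| - ‖σ j‖), sq_abs (q j 0), abs_nonneg (q j 0),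
      norm_nonneg (σ j)]
  have hone : (1 : ENNReal) / 1 = 1 / 2 + 1 / 2 := by
    simp only [one_div, inv_one]
    exact ENNReal.inv_two_add_inv_two.symm
  have hterm : ∀ j, MemLp (fun y => p j y • σ j) 2 ν := fun j =>
    MemLp.smul (memLp_top_const (σ j)) (hpL2 j)
  have hSN : ∀ N, MemLp (fun y => ∑ j ∈ Finset.range N, p j y • σ j) 2 ν := fun N =>
    memLp_finset_sum (Finset.range N) (fun j _ => hterm j)
  have hintd : ∀ i, Integrable (fun y => p i y • δ y) ν := fun i =>
    memLp_one_iff_integrable.mp (hδL2.smul (hpL2 i) (hpqr := ⟨by rw [inv_one]; exact ENNReal.inv_two_add_inv_two⟩))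
  have hintmul : ∀ i j, Integrable (fun y => p i y * p j y) ν := by
    intro i j
    have := memLp_one_iff_integrable.mp ((hpL2 j).smul (hpL2 i) (hpqr := ⟨by rw [inv_one]; exact ENNReal.inv_two_add_inv_two⟩))
    exact this
  have key : ∀ i, (∫ y, p i y • δ y ∂ν) = σ i - (a ^ 2 * q i 0) • S := by
    intro i
    have hFN : ∀ N, ∫ y, p i y • (∑ j ∈ Finset.range N, p j y • σ j) ∂ν
        = ∑ j ∈ Finset.range N,
            ((if i = j then (1:ℝ) else 0) - a ^ 2 * q i 0 * q j 0) • σ j := by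
      intro N
      have hrw : ∀ y, p i y • (∑ j ∈ Finset.range N, p j y • σ j)
          = ∑ j ∈ Finset.range N, (p i y * p j y) • σ j := by
        intro y
        rw [Finset.smul_sum]
        refine Finset.sum_congr rfl (fun j _ => ?_)
        rw [smul_smul]
      simp_rw [hrw]
      rw [integral_finset_sum _ (fun j _ => (hintmul i j).smul_const (σ j))]
      refine Finset.sum_congr rfl (fun j _ => ?_)
      rw [integral_smul_const, horth i j]
    have hlim1 : Filter.Tendsto
        (fun N => ∫ y, p i y • (∑ j ∈ Finset.range N, p j y • σ j) ∂ν)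
        Filter.atTop (nhds (σ i - (a ^ 2 * q i 0) • S)) := by
      simp_rw [hFN]
      have heq : ∀ N, i < N →
          ∑ j ∈ Finset.range N,
              ((if i = j then (1:ℝ) else 0) - a ^ 2 * q i 0 * q j 0) • σ j
          = σ i - (a ^ 2 * q i 0) • ∑ j ∈ Finset.range N, q j 0 • σ j := by
        intro N hN
        have hterm' : ∀ j, ((if i = j then (1:ℝ) else 0) - a ^ 2 * q i 0 * q j 0) • σ j
            = (if i = j then σ j else 0) - (a ^ 2 * q i 0) • (q j 0 • σ j) := by
          intro j
          rw [sub_smul, ite_smul, one_smul, zero_smul, smul_smul]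
        simp_rw [hterm', Finset.sum_sub_distrib, ← Finset.smul_sum]
        congr 1
        rw [Finset.sum_ite_eq (Finset.range N) i (fun j => σ j),
          if_pos (Finset.mem_range.mpr hN)]
      have hlim : Filter.Tendsto
          (fun N => σ i - (a ^ 2 * q i 0) • ∑ j ∈ Finset.range N, q j 0 • σ j)
          Filter.atTop (nhds (σ i - (a ^ 2 * q i 0) • S)) :=
        tendsto_const_nhds.sub (hsum.hasSum.tendsto_sum_nat.const_smul _)
      refine hlim.congr' ?_
      filter_upwards [Filter.eventually_gt_atTop i] with N hN
      exact (heq N hN).symm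
    have hlim2 : Filter.Tendsto
        (fun N => ∫ y, p i y • (∑ j ∈ Finset.range N, p j y • σ j) ∂ν)
        Filter.atTop (nhds (∫ y, p i y • δ y ∂ν)) := by
      rw [tendsto_iff_norm_sub_tendsto_zero]
      set C : ℝ := (∫ y, ‖p i y‖ ^ (2:ℝ) ∂ν) ^ ((1:ℝ)/2) with hC
      have hbound : ∀ N,
          ‖(∫ y, p i y • (∑ j ∈ Finset.range N, p j y • σ j) ∂ν)
              - ∫ y, p i y • δ y ∂ν‖
          ≤ C * Real.sqrt (∫ y, ‖(∑ j ∈ Finset.range N, p j y • σ j) - δ y‖ ^ 2 ∂ν) := by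
        intro N
        have hgL2 : MemLp (fun y => (∑ j ∈ Finset.range N, p j y • σ j) - δ y) 2 ν :=
          (hSN N).sub hδL2
        have hgint : Integrable
            (fun y => p i y • ((∑ j ∈ Finset.range N, p j y • σ j) - δ y)) ν :=
          memLp_one_iff_integrable.mp (hgL2.smul (hpL2 i) (hpqr := ⟨by rw [inv_one]; exact ENNReal.inv_two_add_inv_two⟩))
        have hSNint : Integrable
            (fun y => p i y • (∑ j ∈ Finset.range N, p j y • σ j)) ν :=
          memLp_one_iff_integrable.mp ((hSN N).smul (hpL2 i) (hpqr := ⟨by rw [inv_one]; exact ENNReal.inv_two_add_inv_two⟩))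
        have h1 : (∫ y, p i y • (∑ j ∈ Finset.range N, p j y • σ j) ∂ν)
            - ∫ y, p i y • δ y ∂ν
            = ∫ y, p i y • ((∑ j ∈ Finset.range N, p j y • σ j) - δ y) ∂ν := by
          rw [← integral_sub hSNint (hintd i)]
          simp_rw [smul_sub]
        rw [h1]
        calc ‖∫ y, p i y • ((∑ j ∈ Finset.range N, p j y • σ j) - δ y) ∂ν‖
            ≤ ∫ y, ‖p i y‖ * ‖(∑ j ∈ Finset.range N, p j y • σ j) - δ y‖ ∂ν := by
              refine le_trans (norm_integral_le_integral_norm _) (le_of_eq ?_)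
              refine integral_congr_ae (Filter.Eventually.of_forall fun y => ?_)
              simp [norm_smul]
          _ ≤ (∫ y, ‖p i y‖ ^ (2:ℝ) ∂ν) ^ ((1:ℝ)/2)
              * (∫ y, ‖(∑ j ∈ Finset.range N, p j y • σ j) - δ y‖ ^ (2:ℝ) ∂ν) ^ ((1:ℝ)/2) := by
              have h2 : (ENNReal.ofReal (2:ℝ)) = 2 := by norm_num
              have := MeasureTheory.integral_mul_norm_le_Lp_mul_Lq (μ := ν) (p := 2) (q := 2)
                (f := p i) (g := fun y => ‖(∑ j ∈ Finset.range N, p j y • σ j) - δ y‖)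
                Real.HolderConjugate.two_two (by rw [h2]; exact hpL2 i)
                (by rw [h2]; exact hgL2.norm)
              simpa using this
          _ = C * Real.sqrt (∫ y, ‖(∑ j ∈ Finset.range N, p j y • σ j) - δ y‖ ^ 2 ∂ν) := by
              have hE : (∫ y, ‖(∑ j ∈ Finset.range N, p j y • σ j) - δ y‖ ^ (2:ℝ) ∂ν)
                  = ∫ y, ‖(∑ j ∈ Finset.range N, p j y • σ j) - δ y‖ ^ 2 ∂ν :=
                integral_congr_ae (Filter.Eventually.of_forall fun y => by norm_num)
              rw [hC, hE, Real.sqrt_eq_rpow]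
      have hlimC : Filter.Tendsto
          (fun N => C * Real.sqrt
            (∫ y, ‖(∑ j ∈ Finset.range N, p j y • σ j) - δ y‖ ^ 2 ∂ν))
          Filter.atTop (nhds 0) := by
        have hs : Filter.Tendsto
            (fun N => Real.sqrt
              (∫ y, ‖(∑ j ∈ Finset.range N, p j y • σ j) - δ y‖ ^ 2 ∂ν))
            Filter.atTop (nhds 0) := by
          have := (Real.continuous_sqrt.tendsto 0).comp hδ
          simpa [Function.comp_def] using this
        simpa using hs.const_mul C
      exact squeeze_zero (fun N => norm_nonneg _) hbound hlimC
    exact tendsto_nhds_unique hlim2 hlim1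
  have hci : ∀ i, c i = (a ^ 2 * q i 0) • S := by
    intro i
    rw [hc i, key i, sub_sub_cancel]
  have hnorm : ∀ i, ‖c i‖ ^ 2 = (a ^ 2 * ‖S‖) ^ 2 * (q i 0) ^ 2 := by
    intro i
    rw [hci i, norm_smul, Real.norm_eq_abs, mul_pow, mul_pow, sq_abs, mul_pow]
    ring
  have hsum2 : Summable (fun i => ‖c i‖ ^ 2) := by
    simp_rw [hnorm]
    exact hq0.mul_left _
  refine ⟨hci, ?_, ?_⟩
  · refine memℓp_gen ?_
    have h2 : (2 : ENNReal).toReal = 2 := by norm_num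
    rw [h2]
    refine hsum2.congr (fun i => ?_)
    rw [show (2:ℝ) = ((2:ℕ):ℝ) by norm_num, Real.rpow_natCast]
  · have : ∑' i, ‖c i‖ ^ 2 = (a ^ 2 * ‖S‖) ^ 2 * ∑' i, (q i 0) ^ 2 := by
      simp_rw [hnorm]
      exact tsum_mul_left
    rw [this, Real.sqrt_mul (sq_nonneg _), Real.sqrt_sq
      (mul_nonneg (sq_nonneg a) (norm_nonneg S))]
end

section
/- Under the same setting, the sequence {∫_ℝ δ(y') p_i(y') ν(dy')}_{i=1}^∞ belongs to ℓ²(ℕ, ℝ^P), where δ(y') = Σ_{j=1}^∞ σ_j p_j(y') (convergence in L²(ν)). -/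
open MeasureTheory
open scoped ENNReal

/-- Under the same setting, the sequence `{∫ δ(y') p_i(y') ν(dy')}_i` belongs to
`ℓ²(ℕ, ℝ^P)`, where `δ(y') = Σ_j σ_j p_j(y')` (convergence in `L²(ν)`). -/
theorem stmt4 (P : ℕ) (ν : Measure ℝ) (a : ℝ)
    (q : ℕ → ℝ → ℝ) (p : ℕ → ℝ → ℝ)
    (hp : ∀ i x, p i x = x * q i x)
    (hpL2 : ∀ i, MemLp (p i) 2 ν)
    (horth : ∀ i j, ∫ x, p i x * p j x ∂ν
      = (if i = j then 1 else 0) - a ^ 2 * q i 0 * q j 0)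
    (σ : ℕ → EuclideanSpace ℝ (Fin P))
    (hσ : Summable (fun i => ‖σ i‖ ^ 2))
    (hq0 : Summable (fun i => (q i 0) ^ 2))
    (δ : ℝ → EuclideanSpace ℝ (Fin P))
    (hδL2 : MemLp δ 2 ν)
    (hδ : Filter.Tendsto
      (fun N => ∫ y, ‖(∑ j ∈ Finset.range N, p j y • σ j) - δ y‖ ^ 2 ∂ν)
      Filter.atTop (nhds 0)) :
    Memℓp (fun i => ∫ y, p i y • δ y ∂ν) 2 := by
  classical
  have hr2 : ∀ x : ℝ, x ^ (2:ℝ) = x ^ 2 := fun x => by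
    rw [show (2:ℝ) = ((2:ℕ):ℝ) by norm_num, Real.rpow_natCast]
  have h121 : (1 : ℝ≥0∞) / 1 = 1 / 2 + 1 / 2 := by
    rw [ENNReal.div_add_div_same, one_div_one, one_add_one_eq_two,
      ENNReal.div_self two_ne_zero (ENNReal.ofNat_ne_top (n := 2))]
  -- summability of the series `s = ∑ q j 0 • σ j`
  have hsum : Summable (fun j => q j 0 • σ j) := by
    apply Summable.of_norm_bounded ((hq0.add hσ).div_const 2)
    intro j
    rw [norm_smul, Real.norm_eq_abs]
    nlinarith [sq_nonneg (|q j 0| - ‖σ j‖), sq_abs (q j 0), abs_nonneg (q j 0),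
      norm_nonneg (σ j)]
  set s : EuclideanSpace ℝ (Fin P) := ∑' j, q j 0 • σ j with hs
  -- MemLp of `fun y => p j y • σ j`
  have hpσ : ∀ j, MemLp (fun y => p j y • σ j) 2 ν := fun j =>
    (memLp_top_const (σ j)).smul (hpL2 j) (r := 2)
  -- integrability of products
  have hint : ∀ (g : ℝ → EuclideanSpace ℝ (Fin P)), MemLp g 2 ν →
      ∀ i, Integrable (fun y => p i y • g y) ν := fun g hg i =>
    memLp_one_iff_integrable.mp (hg.smul (hpL2 i) (r := 1))
  have hSNL2 : ∀ N, MemLp (fun y => ∑ j ∈ Finset.range N, p j y • σ j) 2 ν :=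
    fun N => memLp_finset_sum _ (fun j _ => hpσ j)
  -- key formula
  have key : ∀ i, (∫ y, p i y • δ y ∂ν) = σ i - (a ^ 2 * q i 0) • s := by
    intro i
    have hcalc : ∀ N, (∫ y, p i y • (∑ j ∈ Finset.range N, p j y • σ j) ∂ν)
        = ∑ j ∈ Finset.range N,
            ((if i = j then (1:ℝ) else 0) - a ^ 2 * q i 0 * q j 0) • σ j := by
      intro N
      have heq : (fun y => p i y • ∑ j ∈ Finset.range N, p j y • σ j)
          = fun y => ∑ j ∈ Finset.range N, (p i y * p j y) • σ j := by
        funext y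
        rw [Finset.smul_sum]
        exact Finset.sum_congr rfl fun j _ => (smul_smul _ _ _)
      rw [heq, integral_finset_sum]
      · exact Finset.sum_congr rfl fun j _ => by
          rw [integral_smul_const, horth i j]
      · intro j _
        simpa [smul_smul] using hint (fun y => p j y • σ j) (hpσ j) i
    have hsum_eq : ∀ N, (∑ j ∈ Finset.range N,
          ((if i = j then (1:ℝ) else 0) - a ^ 2 * q i 0 * q j 0) • σ j)
        = (if i < N then σ i else 0)
          - (a ^ 2 * q i 0) • (∑ j ∈ Finset.range N, q j 0 • σ j) := by
      intro N
      have hterm : ∀ j, ((if i = j then (1:ℝ) else 0) - a ^ 2 * q i 0 * q j 0) • σ j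
          = (if i = j then σ j else 0) - (a ^ 2 * q i 0) • (q j 0 • σ j) := by
        intro j
        rw [sub_smul, ite_smul, one_smul, zero_smul, smul_smul, mul_assoc]
      simp_rw [hterm, Finset.sum_sub_distrib, Finset.sum_ite_eq, ← Finset.smul_sum,
        Finset.mem_range]
    -- tendsto of the explicit expression
    have hT1 : Filter.Tendsto
        (fun N => ∫ y, p i y • (∑ j ∈ Finset.range N, p j y • σ j) ∂ν)
        Filter.atTop (nhds (σ i - (a ^ 2 * q i 0) • s)) := by
      have h1 : Filter.Tendsto
          (fun N => (if i < N then σ i else 0)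
            - (a ^ 2 * q i 0) • (∑ j ∈ Finset.range N, q j 0 • σ j))
          Filter.atTop (nhds (σ i - (a ^ 2 * q i 0) • s)) := by
        apply Filter.Tendsto.sub
        · apply Filter.Tendsto.congr' _ tendsto_const_nhds
          filter_upwards [Filter.eventually_gt_atTop i] with N hN
          simp [hN]
        · exact (hsum.hasSum.tendsto_sum_nat).const_smul _
      exact h1.congr fun N => ((hcalc N).trans (hsum_eq N)).symm
    -- tendsto to the integral against δ
    have hT2 : Filter.Tendsto
        (fun N => ∫ y, p i y • (∑ j ∈ Finset.range N, p j y • σ j) ∂ν)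
        Filter.atTop (nhds (∫ y, p i y • δ y ∂ν)) := by
      rw [tendsto_iff_norm_sub_tendsto_zero]
      set C : ℝ := (∫ y, |p i y| ^ (2:ℝ) ∂ν) ^ ((1:ℝ)/2) with hC
      have hbound : ∀ N,
          ‖(∫ y, p i y • (∑ j ∈ Finset.range N, p j y • σ j) ∂ν)
            - ∫ y, p i y • δ y ∂ν‖
          ≤ C * Real.sqrt (∫ y, ‖(∑ j ∈ Finset.range N, p j y • σ j) - δ y‖ ^ 2 ∂ν) := by
        intro N
        set g : ℝ → EuclideanSpace ℝ (Fin P) :=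
          fun y => (∑ j ∈ Finset.range N, p j y • σ j) - δ y with hg
        have hgL2 : MemLp g 2 ν := (hSNL2 N).sub hδL2
        have h1 : (∫ y, p i y • (∑ j ∈ Finset.range N, p j y • σ j) ∂ν)
            - (∫ y, p i y • δ y ∂ν) = ∫ y, p i y • g y ∂ν := by
          rw [← integral_sub (hint _ (hSNL2 N) i) (hint δ hδL2 i)]
          exact integral_congr_ae (Filter.Eventually.of_forall fun y => (smul_sub _ _ _).symm)
        rw [h1]
        have hconj : (2:ℝ).HolderConjugate 2 := Real.HolderConjugate.two_two
        have hof : ENNReal.ofReal (2:ℝ) = 2 := by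
          rw [ENNReal.ofReal_ofNat]
        have hm1 : MemLp (fun y => |p i y|) (ENNReal.ofReal 2) ν := by
          rw [hof]; exact (hpL2 i).norm
        have hm2 : MemLp (fun y => ‖g y‖) (ENNReal.ofReal 2) ν := by
          rw [hof]; exact hgL2.norm
        have hcs := integral_mul_le_Lp_mul_Lq_of_nonneg hconj
          (Filter.Eventually.of_forall fun y => abs_nonneg (p i y))
          (Filter.Eventually.of_forall fun y => norm_nonneg (g y))
          hm1 hm2
        calc ‖∫ y, p i y • g y ∂ν‖ ≤ ∫ y, ‖p i y • g y‖ ∂ν :=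
              norm_integral_le_integral_norm _
          _ = ∫ y, |p i y| * ‖g y‖ ∂ν := by
              simp [norm_smul]
          _ ≤ (∫ y, |p i y| ^ (2:ℝ) ∂ν) ^ ((1:ℝ)/2)
              * (∫ y, ‖g y‖ ^ (2:ℝ) ∂ν) ^ ((1:ℝ)/2) := hcs
          _ = C * Real.sqrt (∫ y, ‖g y‖ ^ 2 ∂ν) := by
              rw [hC]
              congr 1
              rw [Real.sqrt_eq_rpow]
              congr 1
              exact integral_congr_ae (Filter.Eventually.of_forall fun y => hr2 _)
      apply squeeze_zero (fun N => norm_nonneg _) hbound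
      have hsqrt : Filter.Tendsto
          (fun N => Real.sqrt (∫ y, ‖(∑ j ∈ Finset.range N, p j y • σ j) - δ y‖ ^ 2 ∂ν))
          Filter.atTop (nhds 0) := by
        have := (Real.continuous_sqrt.tendsto 0).comp hδ
        simpa [Real.sqrt_zero, Function.comp_def] using this
      simpa [mul_zero] using hsqrt.const_mul C
    exact tendsto_nhds_unique hT2 hT1
  -- conclude
  have hfun : (fun i => ∫ y, p i y • δ y ∂ν)
      = fun i => σ i - (a ^ 2 * q i 0) • s := funext key
  rw [hfun]
  have hpow : ((2:ℝ≥0∞)).toReal = (2:ℝ) := by simp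
  have h1 : Memℓp σ 2 := by
    apply memℓp_gen
    rw [hpow]
    exact hσ.congr fun i => (hr2 _).symm
  have h2 : Memℓp (fun i => (a ^ 2 * q i 0) • s) 2 := by
    apply memℓp_gen
    rw [hpow]
    have hs2 : Summable (fun i => ((a ^ 2) ^ 2 * ‖s‖ ^ 2) * q i 0 ^ 2) :=
      hq0.mul_left _
    refine (hs2.congr fun i => ?_)
    rw [hr2, norm_smul, Real.norm_eq_abs, mul_pow, sq_abs]
    ring
  exact h1.sub h2
end
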